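/- Let Γ be a linearly ordered additive abelian group and S a subset of the strictly positive elements of Γ that is well-ordered (for the order of Γ) of order type α. Then the additive submonoid ⟨S⟩ generated by S in Γ is itself a well-ordered subset of Γ, of order type at most ω^(ω ⨳ α), where ⨳ denotes the natural (Hessenberg) product of ordinals. -/

import Mathlib

open scoped Ordinal

/-- Natural (Hessenberg) sum of ordinals (formerly Mathlib's `Ordinal.nadd`). -/
noncomputable def Ordinal.nadd (a b : Ordinal.{u}) : Ordinal.{u} :=
  max (⨆ x : Set.Iio a, Order.succ (Ordinal.nadd x.1 b))
    (⨆ x : Set.Iio b, Order.succ (Ordinal.nadd a x.1))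
termination_by (a, b)
decreasing_by
  · exact Prod.Lex.left _ _ x.2
  · exact Prod.Lex.right _ x.2

infixl:65 " ♯ " => Ordinal.nadd

/-- Natural (Hessenberg) product of ordinals (formerly Mathlib's `Ordinal.nmul`). -/
noncomputable def Ordinal.nmul : Ordinal.{u} → Ordinal.{u} → Ordinal.{u}
  | a, b => sInf {c | ∀ a' < a, ∀ b' < b,
      Ordinal.nmul a' b ♯ Ordinal.nmul a b' < c ♯ Ordinal.nmul a' b'}
termination_by a b => (a, b)

infixl:70 " ⨳ " => Ordinal.nmul

open Classical in
/-- The order type of a subset of a linear order, when it is well-ordered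
(and `0` otherwise). -/
noncomputable def Set.orderTypeLT {Γ : Type*} [LinearOrder Γ] (S : Set Γ) : Ordinal :=
  if h : S.IsWF then
    @Ordinal.type S (· < ·)
      { toTrichotomous := inferInstance
        toIsWellFounded := ⟨h⟩ }
  else 0

namespace Ordinal

theorem nadd_def (a b : Ordinal) : a ♯ b = max (⨆ x : Set.Iio a, Order.succ (x.1 ♯ b))
    (⨆ x : Set.Iio b, Order.succ (a ♯ x.1)) := by
  rw [Ordinal.nadd]

theorem nadd_le_iff {a b c : Ordinal} :
    b ♯ c ≤ a ↔ (∀ b' < b, b' ♯ c < a) ∧ ∀ c' < c, b ♯ c' < a := by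
  rw [nadd_def, max_le_iff, Ordinal.iSup_le_iff, Ordinal.iSup_le_iff]
  simp only [Order.succ_le_iff, Subtype.forall, Set.mem_Iio]

theorem lt_nadd_iff {a b c : Ordinal} :
    a < b ♯ c ↔ (∃ b' < b, a ≤ b' ♯ c) ∨ ∃ c' < c, a ≤ b ♯ c' := by
  rw [← not_le, nadd_le_iff]
  simp only [not_and_or, not_forall, not_lt, exists_prop]

theorem nadd_lt_nadd_left {b c : Ordinal} (h : b < c) (a : Ordinal) : a ♯ b < a ♯ c :=
  lt_nadd_iff.2 (Or.inr ⟨b, h, le_rfl⟩)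

theorem nadd_lt_nadd_right {b c : Ordinal} (h : b < c) (a : Ordinal) : b ♯ a < c ♯ a :=
  lt_nadd_iff.2 (Or.inl ⟨b, h, le_rfl⟩)

theorem nadd_le_nadd_left {b c : Ordinal} (h : b ≤ c) (a : Ordinal) : a ♯ b ≤ a ♯ c := by
  rcases h.lt_or_eq with h | rfl
  · exact (nadd_lt_nadd_left h a).le
  · exact le_rfl

theorem nadd_le_nadd_right {b c : Ordinal} (h : b ≤ c) (a : Ordinal) : b ♯ a ≤ c ♯ a := by
  rcases h.lt_or_eq with h | rfl
  · exact (nadd_lt_nadd_right h a).le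
  · exact le_rfl

theorem nadd_le_nadd {a b c d : Ordinal} (h1 : a ≤ b) (h2 : c ≤ d) : a ♯ c ≤ b ♯ d :=
  (nadd_le_nadd_right h1 c).trans (nadd_le_nadd_left h2 b)

theorem nadd_lt_nadd {a b c d : Ordinal} (h1 : a < b) (h2 : c < d) : a ♯ c < b ♯ d :=
  (nadd_lt_nadd_right h1 c).trans (nadd_lt_nadd_left h2 b)

theorem nadd_lt_nadd_of_lt_of_le {a b c d : Ordinal} (h1 : a < b) (h2 : c ≤ d) :
    a ♯ c < b ♯ d :=
  (nadd_lt_nadd_right h1 c).trans_le (nadd_le_nadd_left h2 b)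

theorem nadd_lt_nadd_of_le_of_lt {a b c d : Ordinal} (h1 : a ≤ b) (h2 : c < d) :
    a ♯ c < b ♯ d :=
  (nadd_le_nadd_right h1 c).trans_lt (nadd_lt_nadd_left h2 b)

theorem nadd_lt_nadd_iff_left (a : Ordinal) {b c : Ordinal} : a ♯ b < a ♯ c ↔ b < c :=
  ⟨fun h => lt_of_not_ge fun h' => (nadd_le_nadd_left h' a).not_gt h,
    fun h => nadd_lt_nadd_left h a⟩

theorem nadd_comm (a b : Ordinal) : a ♯ b = b ♯ a := by
  induction a using Ordinal.induction generalizing b with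
  | _ a IHa =>
  induction b using Ordinal.induction with
  | _ b IHb =>
  refine le_antisymm (nadd_le_iff.2 ⟨fun a' ha' => ?_, fun b' hb' => ?_⟩)
    (nadd_le_iff.2 ⟨fun b' hb' => ?_, fun a' ha' => ?_⟩)
  · rw [IHa a' ha' b]; exact nadd_lt_nadd_left ha' b
  · rw [IHb b' hb']; exact nadd_lt_nadd_right hb' a
  · rw [← IHb b' hb']; exact nadd_lt_nadd_left hb' a
  · rw [← IHa a' ha' b]; exact nadd_lt_nadd_right ha' b

theorem le_self_nadd {a b : Ordinal} : a ≤ a ♯ b := by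
  induction a using Ordinal.induction with
  | _ a IH =>
  exact le_of_forall_lt fun c hc => (IH c hc).trans_lt (nadd_lt_nadd_right hc b)

@[simp]
theorem nadd_zero (a : Ordinal) : a ♯ 0 = a := by
  induction a using Ordinal.induction with
  | _ a IH =>
  refine le_antisymm (nadd_le_iff.2 ⟨fun a' ha' => ?_, fun c hc => ?_⟩) le_self_nadd
  · rw [IH a' ha']; exact ha'
  · exact absurd hc (not_lt_of_ge zero_le)

@[simp]
theorem zero_nadd (a : Ordinal) : 0 ♯ a = a := by
  rw [nadd_comm, nadd_zero]

theorem nadd_one (a : Ordinal) : a ♯ 1 = Order.succ a := by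
  induction a using Ordinal.induction with
  | _ a IH =>
  refine le_antisymm (nadd_le_iff.2 ⟨fun a' ha' => ?_, fun c hc => ?_⟩) ?_
  · rw [IH a' ha']; exact Order.succ_lt_succ ha'
  · rw [Ordinal.lt_one_iff_zero.1 hc, nadd_zero]; exact Order.lt_succ a
  · refine Order.succ_le_of_lt ?_
    calc a = a ♯ 0 := (nadd_zero a).symm
      _ < a ♯ 1 := nadd_lt_nadd_left zero_lt_one a

theorem one_nadd (a : Ordinal) : 1 ♯ a = Order.succ a := by
  rw [nadd_comm, nadd_one]

theorem add_le_nadd (a b : Ordinal) : a + b ≤ a ♯ b := by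
  induction b using Ordinal.induction with
  | _ b IH =>
  rcases eq_or_ne b 0 with rfl | hb
  · rw [add_zero, nadd_zero]
  refine le_of_forall_lt fun c hc => ?_
  obtain ⟨d, hd, hcd⟩ := (Ordinal.lt_add_iff hb).1 hc
  exact (hcd.trans (IH d hd)).trans_lt (nadd_lt_nadd_left hd a)

theorem nadd_assoc (a b c : Ordinal) : a ♯ b ♯ c = a ♯ (b ♯ c) := by
  induction a using Ordinal.induction generalizing b c with
  | _ a IHa =>
  induction b using Ordinal.induction generalizing c with
  | _ b IHb =>
  induction c using Ordinal.induction with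
  | _ c IHc =>
  refine le_antisymm (nadd_le_iff.2 ⟨fun d hd => ?_, fun c' hc' => ?_⟩)
    (nadd_le_iff.2 ⟨fun a' ha' => ?_, fun e he => ?_⟩)
  · rcases lt_nadd_iff.1 hd with ⟨a', ha', hd'⟩ | ⟨b', hb', hd'⟩
    · calc d ♯ c ≤ a' ♯ b ♯ c := nadd_le_nadd_right hd' c
        _ = a' ♯ (b ♯ c) := IHa a' ha' b c
        _ < a ♯ (b ♯ c) := nadd_lt_nadd_right ha' _
    · calc d ♯ c ≤ a ♯ b' ♯ c := nadd_le_nadd_right hd' c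
        _ = a ♯ (b' ♯ c) := IHb b' hb' c
        _ < a ♯ (b ♯ c) := nadd_lt_nadd_left (nadd_lt_nadd_right hb' c) a
  · rw [IHc c' hc']
    exact nadd_lt_nadd_left (nadd_lt_nadd_left hc' b) a
  · rw [← IHa a' ha' b c]
    exact nadd_lt_nadd_right (nadd_lt_nadd_right ha' b) c
  · rcases lt_nadd_iff.1 he with ⟨b', hb', he'⟩ | ⟨c', hc', he'⟩
    · calc a ♯ e ≤ a ♯ (b' ♯ c) := nadd_le_nadd_left he' a
        _ = a ♯ b' ♯ c := (IHb b' hb' c).symm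
        _ < a ♯ b ♯ c := nadd_lt_nadd_right (nadd_lt_nadd_left hb' a) c
    · calc a ♯ e ≤ a ♯ (b ♯ c') := nadd_le_nadd_left he' a
        _ = a ♯ b ♯ c' := (IHc c' hc').symm
        _ < a ♯ b ♯ c := nadd_lt_nadd_left hc' _

instance : Std.Associative (α := Ordinal) (· ♯ ·) := ⟨nadd_assoc⟩
instance : Std.Commutative (α := Ordinal) (· ♯ ·) := ⟨nadd_comm⟩

theorem nadd_cancel_lt {x p q p' q' : Ordinal} (h : p' < q') (hp : p' = x ♯ p)
    (hq : q' = x ♯ q) : p < q := by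
  rw [hp, hq] at h
  exact (nadd_lt_nadd_iff_left x).1 h

theorem nmul_def (a b : Ordinal) : a ⨳ b = sInf {c | ∀ a' < a, ∀ b' < b,
    a' ⨳ b ♯ a ⨳ b' < c ♯ a' ⨳ b'} := by
  rw [Ordinal.nmul]

theorem nmul_nonempty (a b : Ordinal) :
    {c : Ordinal | ∀ a' < a, ∀ b' < b, a' ⨳ b ♯ a ⨳ b' < c ♯ a' ⨳ b'}.Nonempty := by
  refine ⟨⨆ p : Set.Iio a × Set.Iio b, Order.succ (p.1.1 ⨳ b ♯ a ⨳ p.2.1), ?_⟩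
  intro a' ha' b' hb'
  refine lt_of_lt_of_le ?_ le_self_nadd
  exact (Order.lt_succ _).trans_le
    (Ordinal.le_iSup (fun p : Set.Iio a × Set.Iio b => Order.succ (p.1.1 ⨳ b ♯ a ⨳ p.2.1))
      (⟨a', ha'⟩, ⟨b', hb'⟩))

theorem nmul_nadd_lt {a a' b b' : Ordinal} (ha : a' < a) (hb : b' < b) :
    a' ⨳ b ♯ a ⨳ b' < a ⨳ b ♯ a' ⨳ b' := by
  have := csInf_mem (nmul_nonempty a b)
  rw [← nmul_def] at this
  exact this a' ha b' hb

theorem nmul_nadd_le {a a' b b' : Ordinal} (ha : a' ≤ a) (hb : b' ≤ b) :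
    a' ⨳ b ♯ a ⨳ b' ≤ a ⨳ b ♯ a' ⨳ b' := by
  rcases ha.lt_or_eq with ha | rfl
  · rcases hb.lt_or_eq with hb | rfl
    · exact (nmul_nadd_lt ha hb).le
    · rw [nadd_comm]
  · exact le_rfl

theorem nmul_le_iff {a b c : Ordinal} :
    a ⨳ b ≤ c ↔ ∀ a' < a, ∀ b' < b, a' ⨳ b ♯ a ⨳ b' < c ♯ a' ⨳ b' := by
  refine ⟨fun h a' ha b' hb => (nmul_nadd_lt ha hb).trans_le (nadd_le_nadd_right h _),
    fun h => ?_⟩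
  rw [nmul_def]
  exact csInf_le' h

theorem lt_nmul_iff {a b c : Ordinal} :
    c < a ⨳ b ↔ ∃ a' < a, ∃ b' < b, c ♯ a' ⨳ b' ≤ a' ⨳ b ♯ a ⨳ b' := by
  rw [← not_le, nmul_le_iff]
  simp only [not_forall, not_lt, exists_prop]

@[simp]
theorem nmul_zero (a : Ordinal) : a ⨳ 0 = 0 :=
  le_antisymm (nmul_le_iff.2 fun _ _ b' hb => absurd hb (not_lt_of_ge zero_le)) zero_le

@[simp]
theorem zero_nmul (a : Ordinal) : 0 ⨳ a = 0 :=
  le_antisymm (nmul_le_iff.2 fun a' ha _ _ => absurd ha (not_lt_of_ge zero_le)) zero_le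

theorem nmul_comm (a b : Ordinal) : a ⨳ b = b ⨳ a := by
  induction a using Ordinal.induction generalizing b with
  | _ a IHa =>
  induction b using Ordinal.induction with
  | _ b IHb =>
  refine le_antisymm (nmul_le_iff.2 fun a' ha b' hb => ?_)
    (nmul_le_iff.2 fun b' hb a' ha => ?_)
  · rw [IHa a' ha b, IHb b' hb, IHa a' ha b', nadd_comm]
    exact nmul_nadd_lt hb ha
  · rw [← IHb b' hb, ← IHa a' ha b, ← IHa a' ha b', nadd_comm]
    exact nmul_nadd_lt ha hb

theorem nmul_lt_nmul_of_pos_left {a b c : Ordinal} (h₁ : a < b) (h₂ : 0 < c) :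
    c ⨳ a < c ⨳ b :=
  lt_nmul_iff.2 ⟨0, h₂, a, h₁, by simp only [zero_nmul, nadd_zero, zero_nadd, le_refl]⟩

theorem nmul_le_nmul_left {b c : Ordinal} (h : b ≤ c) (a : Ordinal) : a ⨳ b ≤ a ⨳ c := by
  rcases h.lt_or_eq with h | rfl
  · rcases eq_or_ne a 0 with rfl | ha
    · rw [zero_nmul, zero_nmul]
    · exact (nmul_lt_nmul_of_pos_left h (pos_iff_ne_zero.2 ha)).le
  · exact le_rfl

@[simp]
theorem nmul_one (a : Ordinal) : a ⨳ 1 = a := by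
  induction a using Ordinal.induction with
  | _ a IH =>
  refine le_antisymm (nmul_le_iff.2 fun a' ha b' hb => ?_) (le_of_forall_lt fun c hc => ?_)
  · rw [Ordinal.lt_one_iff_zero.1 hb, nmul_zero, nmul_zero, nadd_zero, nadd_zero, IH a' ha]
    exact ha
  · rw [← IH c hc, nmul_comm c, nmul_comm a]
    exact nmul_lt_nmul_of_pos_left hc zero_lt_one

theorem nmul_nadd (a b c : Ordinal) : a ⨳ (b ♯ c) = a ⨳ b ♯ a ⨳ c := by
  induction a using Ordinal.induction generalizing b c with
  | _ a IHa =>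
  induction b using Ordinal.induction generalizing c with
  | _ b IHb =>
  induction c using Ordinal.induction with
  | _ c IHc =>
  refine le_antisymm (nmul_le_iff.2 fun a' ha d hd => ?_)
    (nadd_le_iff.2 ⟨fun d hd => ?_, fun d hd => ?_⟩)
  · rcases lt_nadd_iff.1 hd with ⟨b', hb, hd'⟩ | ⟨c', hc, hd'⟩
    · have h3 := nadd_lt_nadd_of_le_of_lt (nmul_nadd_le ha.le hd') (nmul_nadd_lt ha hb)
      rw [IHa a' ha b' c, IHb b' hb c] at h3
      rw [IHa a' ha b c]
      exact nadd_cancel_lt (x := a' ⨳ b' ♯ a ⨳ b') h3 (by ac_rfl) (by ac_rfl)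
    · have h3 := nadd_lt_nadd_of_le_of_lt (nmul_nadd_le ha.le hd') (nmul_nadd_lt ha hc)
      rw [IHa a' ha b c', IHc c' hc] at h3
      rw [IHa a' ha b c]
      exact nadd_cancel_lt (x := a' ⨳ c' ♯ a ⨳ c') h3 (by ac_rfl) (by ac_rfl)
  · obtain ⟨a', ha, b', hb, hd'⟩ := lt_nmul_iff.1 hd
    have h2 := nmul_nadd_lt ha (nadd_lt_nadd_right hb c)
    rw [IHa a' ha b c, IHb b' hb c, IHa a' ha b' c] at h2
    have h4 := nadd_le_nadd_right hd' (a' ⨳ c ♯ a ⨳ c)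
    have h5 := (h4.trans_eq (by ac_rfl)).trans_lt h2
    exact nadd_cancel_lt (x := a' ⨳ b' ♯ a' ⨳ c) h5 (by ac_rfl) (by ac_rfl)
  · obtain ⟨a', ha, c', hc, hd'⟩ := lt_nmul_iff.1 hd
    have h2 := nmul_nadd_lt ha (nadd_lt_nadd_left hc b)
    rw [IHa a' ha b c, IHc c' hc, IHa a' ha b c'] at h2
    have h4 := nadd_le_nadd_right hd' (a' ⨳ b ♯ a ⨳ b)
    have h5 := (h4.trans_eq (by ac_rfl)).trans_lt h2
    exact nadd_cancel_lt (x := a' ⨳ b ♯ a' ⨳ c') h5 (by ac_rfl) (by ac_rfl)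

theorem nmul_nat_assoc (a b : Ordinal) (n : ℕ) : a ⨳ (b ⨳ (n : Ordinal)) = (a ⨳ b) ⨳ (n : Ordinal) := by
  induction n with
  | zero => simp only [Nat.cast_zero, nmul_zero]
  | succ n ihn =>
    have h1 : ((n+1 : ℕ) : Ordinal) = (n : Ordinal) ♯ 1 := by
      rw [nadd_one, ← Ordinal.add_one_eq_succ]; norm_cast
    rw [h1, nmul_nadd, nmul_nadd, nmul_nadd, nmul_one, nmul_one, ihn]

theorem mul_le_nmul (a b : Ordinal) : a * b ≤ a ⨳ b := by
  induction b using Ordinal.induction with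
  | _ b IH =>
  refine le_of_forall_lt fun c hc => ?_
  obtain ⟨q, hq, r, hr, rfl⟩ := Ordinal.lt_mul_iff.1 hc
  calc a * q + r ≤ a ⨳ q ♯ r := (add_le_add_left (IH q hq) r).trans (add_le_nadd _ _)
    _ < a ⨳ q ♯ a := nadd_lt_nadd_left hr _
    _ = a ⨳ (q ♯ 1) := by rw [nmul_nadd, nmul_one]
    _ ≤ a ⨳ b := nmul_le_nmul_left (by rw [nadd_one]; exact Order.succ_le_of_lt hq) a

end Ordinal

open scoped Ordinal
open Ordinal

namespace OTAux

theorem succ_lt_opow_succ (γ : Ordinal) : γ + 1 < ω ^ (γ + 1) := by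
  rcases eq_or_ne γ 0 with rfl | h
  · simpa using one_lt_omega0
  · have hγ : γ ≤ ω ^ γ := right_le_opow γ one_lt_omega0
    have h2 : (1:Ordinal) < ω ^ γ := by
      calc (1:Ordinal) < ω := one_lt_omega0
        _ = ω ^ (1:Ordinal) := (opow_one ω).symm
        _ ≤ ω ^ γ := opow_le_opow_right omega0_pos (Ordinal.one_le_iff_ne_zero.2 h)
    calc γ + 1 ≤ ω ^ γ + 1 := add_le_add_left hγ 1
      _ < ω ^ γ + ω ^ γ := add_lt_add_right h2 _
      _ = ω ^ γ * 2 := by rw [show (2:Ordinal) = 1 + 1 by norm_num, mul_add, mul_one]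
      _ < ω ^ γ * ω := (mul_lt_mul_iff_right₀ (opow_pos γ omega0_pos)).2
          (by exact_mod_cast nat_lt_omega0 2)
      _ = ω ^ (γ + 1) := by rw [opow_add, opow_one]

theorem add_one_le_of_lt {a b : Ordinal} (h : a < b) : a + 1 ≤ b := by
  rw [Ordinal.add_one_eq_succ]; exact Order.succ_le_of_lt h

private theorem master (e : Ordinal) :
    (∀ a b, a < ω ^ e → b < ω ^ e → a ♯ b < ω ^ e) ∧
    (∀ q r, r < ω ^ e → ω ^ e * q ♯ r = ω ^ e * q + r) ∧
    (∀ q, ω ^ e * q ♯ ω ^ e = ω ^ e * (q + 1)) := by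
  induction e using Ordinal.induction with
  | _ e IH =>
  have hne : (ω : Ordinal) ^ e ≠ 0 := opow_ne_zero e omega0_ne_zero
  -- dnat for smaller exponents
  have dnat : ∀ f, f < e → ∀ m n : ℕ, ω ^ f * m ♯ ω ^ f * n = ω ^ f * (m + n : ℕ) := by
    intro f hf m n
    induction n with
    | zero => simp [nadd_zero]
    | succ n ihn =>
      have hD1 := (IH f hf).2.2
      have h1 : ((n+1 : ℕ) : Ordinal) = (n : Ordinal) + 1 := by push_cast; ring
      have h2 : ((m + (n+1) : ℕ) : Ordinal) = ((m + n : ℕ) : Ordinal) + 1 := by push_cast; rw [add_assoc]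
      calc ω ^ f * (m : ℕ) ♯ ω ^ f * ((n+1 : ℕ) : Ordinal)
          = ω ^ f * (m : ℕ) ♯ (ω ^ f * (n : ℕ) ♯ ω ^ f) := by rw [hD1 (n : Ordinal), h1, mul_add,
            mul_one]
        _ = (ω ^ f * (m : ℕ) ♯ ω ^ f * (n : ℕ)) ♯ ω ^ f := (nadd_assoc _ _ _).symm
        _ = ω ^ f * ((m + n : ℕ) : Ordinal) ♯ ω ^ f := by rw [ihn]
        _ = ω ^ f * (((m + n : ℕ) : Ordinal) + 1) := hD1 _
        _ = ω ^ f * ((m + (n+1) : ℕ) : Ordinal) := by rw [h2]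
  have hN4 : ∀ a b, a < ω ^ e → b < ω ^ e → a ♯ b < ω ^ e := by
    intro a b ha hb
    rcases eq_or_ne e 0 with rfl | he0
    · simp only [opow_zero, Ordinal.lt_one_iff_zero] at ha hb ⊢
      rw [ha, hb, nadd_zero]
    rcases eq_or_ne a 0 with rfl | ha0
    · rwa [zero_nadd]
    rcases eq_or_ne b 0 with rfl | hb0
    · rwa [nadd_zero]
    set f := max (log ω a) (log ω b) with hfdef
    have hf : f < e := max_lt ((lt_opow_iff_log_lt one_lt_omega0 ha0).1 ha)
      ((lt_opow_iff_log_lt one_lt_omega0 hb0).1 hb)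
    have hfne : (ω : Ordinal) ^ f ≠ 0 := opow_ne_zero f omega0_ne_zero
    have key : ∀ c : Ordinal, c ≠ 0 → log ω c ≤ f → ∃ n : ℕ, c < ω ^ f * (n + 1 : ℕ) := by
      intro c hc0 hlog
      have h1 : c < ω ^ f * ω := by
        have := lt_opow_succ_log_self one_lt_omega0 c
        calc c < ω ^ Order.succ (log ω c) := this
          _ ≤ ω ^ Order.succ f := opow_le_opow_right omega0_pos (Order.succ_le_succ hlog)
          _ = ω ^ f * ω := by rw [← Ordinal.add_one_eq_succ, opow_add, opow_one]
      obtain ⟨n, hn⟩ := lt_omega0.1 ((div_lt hfne).2 h1)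
      refine ⟨n, ?_⟩
      have := lt_mul_succ_div c hfne
      rwa [hn, ← Ordinal.add_one_eq_succ, ← Nat.cast_one (R := Ordinal), ← Nat.cast_add] at this
    obtain ⟨n, hn⟩ := key a ha0 (le_max_left _ _)
    obtain ⟨m, hm⟩ := key b hb0 (le_max_right _ _)
    calc a ♯ b < ω ^ f * (n + 1 : ℕ) ♯ ω ^ f * (m + 1 : ℕ) := nadd_lt_nadd hn hm
      _ = ω ^ f * ((n + 1) + (m + 1) : ℕ) := dnat f hf _ _
      _ < ω ^ f * ω := (mul_lt_mul_iff_right₀ (opow_pos f omega0_pos)).2 (nat_lt_omega0 _)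
      _ = ω ^ (f + 1) := by rw [opow_add, opow_one]
      _ ≤ ω ^ e := opow_le_opow_right omega0_pos (add_one_le_of_lt hf)
  have hE : ∀ q r, r < ω ^ e → ω ^ e * q ♯ r = ω ^ e * q + r := by
    intro q
    induction q using Ordinal.induction with
    | _ q Eq_ih =>
    intro r
    induction r using Ordinal.induction with
    | _ r Er_ih =>
    intro hr
    refine le_antisymm (nadd_le_iff.2 ⟨?_, ?_⟩) (add_le_nadd _ _)
    · intro x hx
      have hj : x / ω ^ e < q := (div_lt hne).2 hx
      have ht : x % ω ^ e < ω ^ e := mod_lt x hne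
      have hxle : x ≤ ω ^ e * (x / ω ^ e) ♯ x % ω ^ e := by
        conv_lhs => rw [← div_add_mod x (ω ^ e)]
        exact add_le_nadd _ _
      calc x ♯ r ≤ (ω ^ e * (x / ω ^ e) ♯ x % ω ^ e) ♯ r := nadd_le_nadd_right hxle r
        _ = ω ^ e * (x / ω ^ e) ♯ (x % ω ^ e ♯ r) := nadd_assoc _ _ _
        _ = ω ^ e * (x / ω ^ e) + (x % ω ^ e ♯ r) := Eq_ih _ hj _ (hN4 _ _ ht hr)
        _ < ω ^ e * (x / ω ^ e) + ω ^ e := add_lt_add_right (hN4 _ _ ht hr) _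
        _ = ω ^ e * (x / ω ^ e + 1) := by rw [mul_add, mul_one]
        _ ≤ ω ^ e * q := mul_le_mul_right (add_one_le_of_lt hj) _
        _ ≤ ω ^ e * q + r := le_self_add
    · intro y hy
      calc ω ^ e * q ♯ y = ω ^ e * q + y := Er_ih y hy (hy.trans hr)
        _ < ω ^ e * q + r := add_lt_add_right hy _
  refine ⟨hN4, hE, ?_⟩
  intro q
  induction q using Ordinal.induction with
  | _ q D1_ih =>
  refine le_antisymm (nadd_le_iff.2 ⟨?_, ?_⟩) ?_
  · intro x hx
    have hj : x / ω ^ e < q := (div_lt hne).2 hx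
    have ht : x % ω ^ e < ω ^ e := mod_lt x hne
    have hxle : x ≤ ω ^ e * (x / ω ^ e) ♯ x % ω ^ e := by
      conv_lhs => rw [← div_add_mod x (ω ^ e)]
      exact add_le_nadd _ _
    calc x ♯ ω ^ e ≤ (ω ^ e * (x / ω ^ e) ♯ x % ω ^ e) ♯ ω ^ e := nadd_le_nadd_right hxle _
      _ = (ω ^ e * (x / ω ^ e) ♯ ω ^ e) ♯ x % ω ^ e := by
          rw [nadd_assoc, nadd_comm (x % ω ^ e), ← nadd_assoc]
      _ = ω ^ e * (x / ω ^ e + 1) ♯ x % ω ^ e := by rw [D1_ih _ hj]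
      _ = ω ^ e * (x / ω ^ e + 1) + x % ω ^ e := hE _ _ ht
      _ < ω ^ e * (x / ω ^ e + 1) + ω ^ e := add_lt_add_right ht _
      _ = ω ^ e * (x / ω ^ e + 1 + 1) := by rw [mul_add (ω ^ e) (x / ω ^ e + 1) 1, mul_one]
      _ ≤ ω ^ e * (q + 1) := mul_le_mul_right (add_le_add_left (add_one_le_of_lt hj) 1) _
  · intro y hy
    calc ω ^ e * q ♯ y = ω ^ e * q + y := hE q y hy
      _ < ω ^ e * q + ω ^ e := add_lt_add_right hy _
      _ = ω ^ e * (q + 1) := by rw [mul_add, mul_one]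
  · rw [mul_add, mul_one]
    exact add_le_nadd _ _

theorem nadd_lt_opow {e a b : Ordinal} (ha : a < ω ^ e) (hb : b < ω ^ e) : a ♯ b < ω ^ e :=
  (master e).1 a b ha hb

theorem opow_mul_nadd_eq (e q : Ordinal) {r : Ordinal} (hr : r < ω ^ e) :
    ω ^ e * q ♯ r = ω ^ e * q + r :=
  (master e).2.1 q r hr

theorem opow_mul_nadd_opow (e q : Ordinal) : ω ^ e * q ♯ ω ^ e = ω ^ e * (q + 1) :=
  (master e).2.2 q

theorem opow_nmul_nat (f : Ordinal) (n : ℕ) : ω ^ f ⨳ (n : Ordinal) = ω ^ f * n := by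
  induction n with
  | zero => simp
  | succ n ihn =>
    have h1 : ((n+1 : ℕ) : Ordinal) = (n : Ordinal) ♯ 1 := by
      rw [nadd_one, ← Ordinal.add_one_eq_succ]; norm_cast
    rw [h1, nmul_nadd, nmul_one, ihn, opow_mul_nadd_opow, nadd_one, ← Ordinal.add_one_eq_succ]

theorem nmul_omega0_opow (δ : Ordinal) : ω ⨳ ω ^ δ = ω ^ (δ + 1) := by
  induction δ using Ordinal.induction with
  | _ δ N3ih =>
  refine le_antisymm (nmul_le_iff.2 ?_) ?_
  · intro a' ha' b' hb'
    refine lt_of_lt_of_le ?_ le_self_nadd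
    apply nadd_lt_opow
    · obtain ⟨n, rfl⟩ := lt_omega0.1 ha'
      rw [nmul_comm, opow_nmul_nat]
      calc ω ^ δ * n < ω ^ δ * ω := (mul_lt_mul_iff_right₀ (opow_pos δ omega0_pos)).2
            (nat_lt_omega0 n)
        _ = ω ^ (δ + 1) := by rw [opow_add, opow_one]
    · rcases eq_or_ne b' 0 with rfl | hb0
      · rw [nmul_zero]; exact opow_pos _ omega0_pos
      set f := log ω b'
      have hf : f < δ := (lt_opow_iff_log_lt one_lt_omega0 hb0).1 hb'
      have hfne : (ω : Ordinal) ^ f ≠ 0 := opow_ne_zero f omega0_ne_zero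
      have h1 : b' < ω ^ f * ω := by
        calc b' < ω ^ Order.succ (log ω b') := lt_opow_succ_log_self one_lt_omega0 b'
          _ = ω ^ f * ω := by rw [← Ordinal.add_one_eq_succ, opow_add, opow_one]
      obtain ⟨n, hn⟩ := lt_omega0.1 ((div_lt hfne).2 h1)
      have h2 : b' < ω ^ f * ((n+1 : ℕ) : Ordinal) := by
        have := lt_mul_succ_div b' hfne
        rwa [hn, ← Ordinal.add_one_eq_succ, ← Nat.cast_one (R := Ordinal), ← Nat.cast_add] at this
      calc ω ⨳ b' ≤ ω ⨳ (ω ^ f * ((n+1 : ℕ) : Ordinal)) := nmul_le_nmul_left h2.le ω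
        _ = ω ⨳ (ω ^ f ⨳ ((n+1 : ℕ) : Ordinal)) := by rw [opow_nmul_nat]
        _ = (ω ⨳ ω ^ f) ⨳ ((n+1 : ℕ) : Ordinal) := nmul_nat_assoc _ _ _
        _ = ω ^ (f + 1) ⨳ ((n+1 : ℕ) : Ordinal) := by rw [N3ih f hf]
        _ = ω ^ (f + 1) * ((n+1 : ℕ) : Ordinal) := opow_nmul_nat _ _
        _ < ω ^ (f + 1) * ω := (mul_lt_mul_iff_right₀ (opow_pos _ omega0_pos)).2 (nat_lt_omega0 _)
        _ = ω ^ (f + 1 + 1) := by rw [opow_add _ (f+1), opow_one]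
        _ ≤ ω ^ (δ + 1) := opow_le_opow_right omega0_pos
            (add_le_add_left (add_one_le_of_lt hf) 1)
  · calc ω ^ (δ + 1) = ω ^ δ * ω := by rw [opow_add, opow_one]
      _ ≤ ω ^ δ ⨳ ω := mul_le_nmul _ _
      _ = ω ⨳ ω ^ δ := nmul_comm _ _

end OTAux

namespace OTAux

variable {Γ : Type*} [LinearOrder Γ]

/-- The well-order instance used in `Set.orderTypeLT`. -/
def wo {S : Set Γ} (h : S.IsWF) : IsWellOrder S (· < ·) :=
  { toTrichotomous := inferInstance
    toIsWellFounded := ⟨h⟩ }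

theorem orderTypeLT_eq {S : Set Γ} (h : S.IsWF) :
    S.orderTypeLT = @Ordinal.type S (· < ·) (wo h) :=
  dif_pos h

theorem orderTypeLT_empty : (∅ : Set Γ).orderTypeLT = 0 := by
  letI := wo (Set.isWF_empty (α := Γ))
  rw [orderTypeLT_eq Set.isWF_empty]
  exact type_eq_zero_iff_isEmpty.2 (by simp)

theorem eq_empty_of_orderTypeLT {A : Set Γ} (hA : A.IsWF) (h : A.orderTypeLT = 0) : A = ∅ := by
  letI := wo hA
  rw [orderTypeLT_eq hA, type_eq_zero_iff_isEmpty] at h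
  exact by simpa using h

theorem orderTypeLT_mono {A B : Set Γ} (hB : B.IsWF) (hAB : A ⊆ B) :
    A.orderTypeLT ≤ B.orderTypeLT := by
  have hA : A.IsWF := hB.mono hAB
  letI := wo hA; letI := wo hB
  rw [orderTypeLT_eq hA, orderTypeLT_eq hB]
  refine type_le_iff'.2 ⟨⟨⟨Set.inclusion hAB, Set.inclusion_injective hAB⟩, ?_⟩⟩
  intro a b
  simp [Set.inclusion, Subtype.mk_lt_mk, ← Subtype.coe_lt_coe]

theorem orderTypeLT_inter_Iio_lt {A : Set Γ} (hA : A.IsWF) {x : Γ} (hx : x ∈ A) :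
    (A ∩ Set.Iio x).orderTypeLT < A.orderTypeLT := by
  have hA' : (A ∩ Set.Iio x).IsWF := hA.mono Set.inter_subset_left
  letI := wo hA'; letI := wo hA
  rw [orderTypeLT_eq hA', orderTypeLT_eq hA]
  refine type_lt_iff.2 ⟨⟨⟨⟨fun a => ⟨a.1, a.2.1⟩, ?_⟩, ?_⟩, ⟨x, hx⟩, ?_⟩⟩
  · intro a b h
    apply Subtype.ext
    simpa using congrArg Subtype.val h
  · intro a b
    exact Iff.rfl
  · intro b
    constructor
    · rintro ⟨a, rfl⟩
      exact a.2.2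
    · intro hb
      exact ⟨⟨b.1, b.2, hb⟩, rfl⟩

theorem orderTypeLT_inter_Iio_eq {A : Set Γ} (hA : A.IsWF) {x : Γ} (hx : x ∈ A) :
    (A ∩ Set.Iio x).orderTypeLT = @Ordinal.typein A (· < ·) (wo hA) ⟨x, hx⟩ := by
  letI := wo hA
  have hA' : (A ∩ Set.Iio x).IsWF := hA.mono Set.inter_subset_left
  letI := wo hA'
  rw [orderTypeLT_eq hA', ← type_subrel (α := A) (· < ·) ⟨x, hx⟩]
  apply Ordinal.type_eq.2
  refine ⟨⟨⟨fun y => ⟨⟨y.1, y.2.1⟩, y.2.2⟩, fun z => ⟨z.1.1, z.1.2, z.2⟩, ?_, ?_⟩, ?_⟩⟩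
  · intro y; rfl
  · intro z; rfl
  · intro a b; exact Iff.rfl

theorem orderTypeLT_le_of_forall_lt {A : Set Γ} (hA : A.IsWF) {c : Ordinal}
    (h : ∀ x ∈ A, (A ∩ Set.Iio x).orderTypeLT < c) : A.orderTypeLT ≤ c := by
  by_contra hc
  push_neg at hc
  letI := wo hA
  rw [orderTypeLT_eq hA] at hc
  obtain ⟨⟨x, hx⟩, hty⟩ := Ordinal.typein_surj (α := A) (· < ·) hc
  have h2 := h x hx
  rw [orderTypeLT_inter_Iio_eq hA hx, hty] at h2
  exact lt_irrefl c h2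

theorem orderTypeLT_union_eq {A B : Set Γ} (hA : A.IsWF) (hB : B.IsWF)
    (hlt : ∀ a ∈ A, ∀ b ∈ B, a < b) :
    (A ∪ B).orderTypeLT = A.orderTypeLT + B.orderTypeLT := by
  have hU : (A ∪ B).IsWF := hA.union hB
  letI := wo hA; letI := wo hB; letI := wo hU
  rw [orderTypeLT_eq hA, orderTypeLT_eq hB, orderTypeLT_eq hU, ← type_sum_lex]
  apply Ordinal.type_eq.2
  have hf : ∀ z : (A : Type _) ⊕ (B : Type _), (Sum.elim (fun a : A => a.1) (fun b : B => b.1) z) ∈ A ∪ B := by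
    rintro (a | b)
    · exact Or.inl a.2
    · exact Or.inr b.2
  let f : (A : Type _) ⊕ (B : Type _) → (A ∪ B : Set Γ) := fun z => ⟨_, hf z⟩
  have hinj : Function.Injective f := by
    rintro (a | b) (a' | b') h
    · have := congrArg Subtype.val h
      simp only [f, Sum.elim_inl] at this
      exact congrArg Sum.inl (Subtype.ext this)
    · have := congrArg Subtype.val h
      simp only [f, Sum.elim_inl, Sum.elim_inr] at this
      exact absurd (this ▸ hlt _ a.2 _ b'.2) (lt_irrefl _)
    · have := congrArg Subtype.val h
      simp only [f, Sum.elim_inl, Sum.elim_inr] at this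
      exact absurd (this ▸ hlt _ a'.2 _ b.2) (lt_irrefl _)
    · have := congrArg Subtype.val h
      simp only [f, Sum.elim_inr] at this
      exact congrArg Sum.inr (Subtype.ext this)
  have hsurj : Function.Surjective f := by
    rintro ⟨y, hy | hy⟩
    · exact ⟨Sum.inl ⟨y, hy⟩, rfl⟩
    · exact ⟨Sum.inr ⟨y, hy⟩, rfl⟩
  have hrel : ∀ {z w : (A : Type _) ⊕ (B : Type _)},
      (f z : Γ) < (f w : Γ) ↔ Sum.Lex (· < ·) (· < ·) z w := by
    rintro (a | b) (a' | b')
    · simpa [f] using ⟨Sum.Lex.inl, fun h => by cases h; assumption⟩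
    · simp only [f, Sum.elim_inl, Sum.elim_inr]
      exact iff_of_true (hlt _ a.2 _ b'.2) (Sum.Lex.sep _ _)
    · simp only [f, Sum.elim_inl, Sum.elim_inr]
      refine iff_of_false (not_lt.2 (hlt _ a'.2 _ b.2).le) ?_
      rintro ⟨⟩
    · simpa [f] using ⟨Sum.Lex.inr, fun h => by cases h; assumption⟩
  exact ⟨(RelIso.ofSurjective ⟨⟨f, hinj⟩, hrel⟩ hsurj).symm⟩

private theorem union_le_aux (v : Ordinal) : ∀ {A B : Set Γ}, A.IsWF → B.IsWF →
    A.orderTypeLT ♯ B.orderTypeLT ≤ v → (A ∪ B).orderTypeLT ≤ A.orderTypeLT ♯ B.orderTypeLT := by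
  induction v using Ordinal.induction with
  | _ v IHv =>
  intro A B hA hB hv
  apply orderTypeLT_le_of_forall_lt (hA.union hB)
  intro x hx
  rw [Set.union_inter_distrib_right]
  have hwfa := hA.mono (Set.inter_subset_left (t := Set.Iio x))
  have hwfb := hB.mono (Set.inter_subset_left (t := Set.Iio x))
  rcases hx with hxA | hxB
  · have h1 := orderTypeLT_inter_Iio_lt hA hxA
    have h2 := orderTypeLT_mono hB (Set.inter_subset_left (t := Set.Iio x))
    have hlt := nadd_lt_nadd_of_lt_of_le h1 h2
    exact lt_of_le_of_lt (IHv _ (lt_of_lt_of_le hlt hv) hwfa hwfb le_rfl) hlt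
  · have h1 := orderTypeLT_mono hA (Set.inter_subset_left (t := Set.Iio x))
    have h2 := orderTypeLT_inter_Iio_lt hB hxB
    have hlt := nadd_lt_nadd_of_le_of_lt h1 h2
    exact lt_of_le_of_lt (IHv _ (lt_of_lt_of_le hlt hv) hwfa hwfb le_rfl) hlt

theorem orderTypeLT_union_le {A B : Set Γ} (hA : A.IsWF) (hB : B.IsWF) :
    (A ∪ B).orderTypeLT ≤ A.orderTypeLT ♯ B.orderTypeLT :=
  union_le_aux _ hA hB le_rfl

theorem exists_split {A : Set Γ} (hA : A.IsWF) (c d : Ordinal) (h : A.orderTypeLT ≤ c + d) :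
    ∃ A1 A2 : Set Γ, A1 ⊆ A ∧ A2 ⊆ A ∧ A = A1 ∪ A2 ∧
      A1.orderTypeLT ≤ c ∧ A2.orderTypeLT ≤ d := by
  classical
  set A1 := {y | y ∈ A ∧ (A ∩ Set.Iio y).orderTypeLT < c} with hA1def
  set A2 := {y | y ∈ A ∧ ¬ (A ∩ Set.Iio y).orderTypeLT < c} with hA2def
  have hsub1 : A1 ⊆ A := fun y hy => hy.1
  have hsub2 : A2 ⊆ A := fun y hy => hy.1
  have hwf1 := hA.mono hsub1
  have hwf2 := hA.mono hsub2
  have hcup : A = A1 ∪ A2 := by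
    ext y
    simp only [hA1def, hA2def, Set.mem_union, Set.mem_setOf_eq]
    tauto
  have hdc : ∀ y ∈ A1, A1 ∩ Set.Iio y = A ∩ Set.Iio y := by
    intro y hy
    ext z
    constructor
    · rintro ⟨hz1, hz2⟩; exact ⟨hz1.1, hz2⟩
    · rintro ⟨hz1, hz2⟩
      refine ⟨⟨hz1, lt_of_le_of_lt ?_ hy.2⟩, hz2⟩
      exact orderTypeLT_mono (hA.mono Set.inter_subset_left)
        (Set.inter_subset_inter_right A (Set.Iio_subset_Iio hz2.le))
  have h1le : A1.orderTypeLT ≤ c := by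
    apply orderTypeLT_le_of_forall_lt hwf1
    intro y hy
    rw [hdc y hy]
    exact hy.2
  have hblw : ∀ a1 ∈ A1, ∀ a2 ∈ A2, a1 < a2 := by
    intro a1 h1 a2 h2
    by_contra hle
    push_neg at hle
    refine h2.2 (lt_of_le_of_lt ?_ h1.2)
    exact orderTypeLT_mono (hA.mono Set.inter_subset_left)
      (Set.inter_subset_inter_right A (Set.Iio_subset_Iio hle))
  refine ⟨A1, A2, hsub1, hsub2, hcup, h1le, ?_⟩
  rcases A2.eq_empty_or_nonempty with h2e | h2ne
  · rw [h2e, orderTypeLT_empty]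
    exact zero_le
  have hkey : ∀ y ∈ A2, A ∩ Set.Iio y = A1 ∪ (A2 ∩ Set.Iio y) := by
    intro y hy
    ext z
    constructor
    · rintro ⟨hz1, hz2⟩
      have : z ∈ A1 ∪ A2 := hcup ▸ hz1
      rcases this with hz | hz
      · exact Or.inl hz
      · exact Or.inr ⟨hz, hz2⟩
    · rintro (hz | ⟨hz, hz2⟩)
      · exact ⟨hz.1, hblw _ hz _ hy⟩
      · exact ⟨hz.1, hz2⟩
  have hy0 := hwf2.min_mem h2ne
  have hA1c : A1.orderTypeLT = c := by
    refine le_antisymm h1le ?_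
    have h0 := (hwf2.min_mem h2ne).2
    rw [not_lt] at h0
    refine le_trans h0 ?_
    rw [hkey _ hy0]
    have : A2 ∩ Set.Iio (hwf2.min h2ne) = ∅ := by
      ext z
      simp only [Set.mem_inter_iff, Set.mem_Iio, Set.mem_empty_iff_false, iff_false]
      rintro ⟨hz1, hz2⟩
      exact hwf2.not_lt_min h2ne hz1 hz2
    rw [this, Set.union_empty]
  apply orderTypeLT_le_of_forall_lt hwf2
  intro y hy
  have hr : (A ∩ Set.Iio y).orderTypeLT < c + d :=
    lt_of_lt_of_le (orderTypeLT_inter_Iio_lt hA hy.1) h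
  rw [hkey y hy, orderTypeLT_union_eq hwf1 (hwf2.mono Set.inter_subset_left)
    (fun a1 h1 a2 h2 => hblw a1 h1 a2 h2.1), hA1c] at hr
  exact (add_lt_add_iff_left c).1 hr

end OTAux

section PC
open Pointwise

open scoped Ordinal
open Ordinal
namespace OTAux

variable {Γ : Type*} [AddCommMonoid Γ] [LinearOrder Γ] [IsOrderedCancelAddMonoid Γ]

theorem addWF {A B : Set Γ} (hA : A.IsWF) (hB : B.IsWF) : (A + B).IsWF := by
  rw [← Set.isPWO_iff_isWF] at *
  exact hA.add hB

private theorem pc_aux (cb : Ordinal) : ∀ u v : Ordinal, u ♯ v ≤ cb →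
    ∀ A B : Set Γ, A.IsWF → B.IsWF →
    A.orderTypeLT ≤ ω ^ u → B.orderTypeLT ≤ ω ^ v → (A + B).orderTypeLT ≤ ω ^ (u ♯ v) := by
  induction cb using Ordinal.induction with
  | _ cb IHcb =>
  intro u v huv A B hA hB hAu hBv
  have hABwf : (A + B).IsWF := addWF hA hB
  have key : ∀ u' v' : Ordinal, u' ♯ v' ≤ cb → ∀ A' B' : Set Γ, A'.IsWF → B'.IsWF →
      A'.orderTypeLT < ω ^ u' → B'.orderTypeLT ≤ ω ^ v' →
      (A' + B').orderTypeLT < ω ^ (u' ♯ v') := by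
    intro u' v' hc A' B' hA' hB' hAu' hBv'
    rcases eq_or_ne A'.orderTypeLT 0 with h0 | h0
    · rw [eq_empty_of_orderTypeLT hA' h0, Set.empty_add, orderTypeLT_empty]
      exact opow_pos _ omega0_pos
    set δ := A'.orderTypeLT with hδdef
    set w := log ω δ with hwdef
    have hw : w < u' := by
      have h1 : ω ^ w ≤ δ := opow_log_le_self ω h0
      exact (opow_lt_opow_iff_right one_lt_omega0).1 (lt_of_le_of_lt h1 hAu')
    have hwv : w ♯ v' < u' ♯ v' := nadd_lt_nadd_right hw v'
    have hfne : (ω : Ordinal) ^ w ≠ 0 := opow_ne_zero w omega0_ne_zero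
    obtain ⟨n, hn⟩ : ∃ n : ℕ, δ ≤ ω ^ w * (n + 1 : ℕ) := by
      have h1 : δ < ω ^ w * ω := by
        calc δ < ω ^ Order.succ (log ω δ) := lt_opow_succ_log_self one_lt_omega0 δ
          _ = ω ^ w * ω := by rw [← Ordinal.add_one_eq_succ, opow_add, opow_one]
      obtain ⟨n, hn⟩ := lt_omega0.1 ((div_lt hfne).2 h1)
      refine ⟨n, le_of_lt ?_⟩
      have := lt_mul_succ_div δ hfne
      rwa [hn, ← Ordinal.add_one_eq_succ, ← Nat.cast_one (R := Ordinal), ← Nat.cast_add] at this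
    have Q : ∀ (n : ℕ) (A'' : Set Γ), A''.IsWF → A''.orderTypeLT ≤ ω ^ w * n →
        (A'' + B').orderTypeLT ≤ ω ^ (w ♯ v') * n := by
      intro n
      induction n with
      | zero =>
        intro A'' hwf h0'
        simp only [Nat.cast_zero, mul_zero, nonpos_iff_eq_zero] at h0' ⊢
        rw [eq_empty_of_orderTypeLT hwf h0', Set.empty_add, orderTypeLT_empty]
      | succ n ihn =>
        intro A'' hwf hle
        have hle' : A''.orderTypeLT ≤ ω ^ w * n + ω ^ w := by
          have hcast : ((n+1 : ℕ) : Ordinal) = (n : Ordinal) + 1 := by push_cast; ring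
          rwa [hcast, mul_add, mul_one] at hle
        obtain ⟨A1, A2, hs1, hs2, hunion, h1, h2⟩ := exists_split hwf (ω ^ w * n) (ω ^ w) hle'
        rw [hunion, Set.union_add]
        have hwf1 := hwf.mono hs1
        have hwf2 := hwf.mono hs2
        calc ((A1 + B') ∪ (A2 + B')).orderTypeLT
            ≤ (A1 + B').orderTypeLT ♯ (A2 + B').orderTypeLT :=
              orderTypeLT_union_le (addWF hwf1 hB') (addWF hwf2 hB')
          _ ≤ ω ^ (w ♯ v') * n ♯ ω ^ (w ♯ v') := by
              refine nadd_le_nadd (ihn A1 hwf1 h1) ?_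
              have := IHcb (w ♯ v') (lt_of_lt_of_le hwv hc) w v' le_rfl A2 B' hwf2 hB' h2 hBv'
              exact this
          _ = ω ^ (w ♯ v') * (n + 1 : ℕ) := by
              rw [opow_mul_nadd_opow]
              norm_cast
    calc (A' + B').orderTypeLT ≤ ω ^ (w ♯ v') * (n + 1 : ℕ) := Q (n+1) A' hA' hn
      _ < ω ^ (w ♯ v') * ω := (mul_lt_mul_iff_right₀ (opow_pos _ omega0_pos)).2 (nat_lt_omega0 _)
      _ = ω ^ (w ♯ v' + 1) := by rw [opow_add, opow_one]
      _ ≤ ω ^ (u' ♯ v') := opow_le_opow_right omega0_pos (add_one_le_of_lt hwv)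
  apply orderTypeLT_le_of_forall_lt hABwf
  intro x hx
  obtain ⟨a, ha, b, hb, rfl⟩ := Set.mem_add.1 hx
  have hwfa := hA.mono (Set.inter_subset_left (t := Set.Iio a))
  have hwfb := hB.mono (Set.inter_subset_left (t := Set.Iio b))
  have hincl : (A + B) ∩ Set.Iio (a + b) ⊆ ((A ∩ Set.Iio a) + B) ∪ ((B ∩ Set.Iio b) + A) := by
    rintro z ⟨hz1, hz2⟩
    obtain ⟨a', ha', b', hb', rfl⟩ := Set.mem_add.1 hz1
    rw [Set.mem_Iio] at hz2
    by_cases hca : a' < a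
    · exact Or.inl (Set.add_mem_add ⟨ha', hca⟩ hb')
    · have hcb2 : b' < b := by
        by_contra hcb2
        push_neg at hca hcb2
        exact absurd hz2 (not_lt.2 (add_le_add hca hcb2))
      refine Or.inr ?_
      rw [add_comm a' b']
      exact Set.add_mem_add ⟨hb', hcb2⟩ ha'
  have t1 : ((A ∩ Set.Iio a) + B).orderTypeLT < ω ^ (u ♯ v) :=
    key u v huv _ B hwfa hB (lt_of_lt_of_le (orderTypeLT_inter_Iio_lt hA ha) hAu) hBv
  have t2 : ((B ∩ Set.Iio b) + A).orderTypeLT < ω ^ (u ♯ v) := by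
    have := key v u (by rwa [nadd_comm]) _ A hwfb hA
      (lt_of_lt_of_le (orderTypeLT_inter_Iio_lt hB hb) hBv) hAu
    rwa [nadd_comm v u] at this
  calc ((A + B) ∩ Set.Iio (a + b)).orderTypeLT
      ≤ (((A ∩ Set.Iio a) + B) ∪ ((B ∩ Set.Iio b) + A)).orderTypeLT :=
        orderTypeLT_mono ((addWF hwfa hB).union (addWF hwfb hA)) hincl
    _ ≤ ((A ∩ Set.Iio a) + B).orderTypeLT ♯ ((B ∩ Set.Iio b) + A).orderTypeLT :=
        orderTypeLT_union_le (addWF hwfa hB) (addWF hwfb hA)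
    _ < ω ^ (u ♯ v) := nadd_lt_opow t1 t2

theorem pc {u v : Ordinal} {A B : Set Γ} (hA : A.IsWF) (hB : B.IsWF)
    (hAu : A.orderTypeLT ≤ ω ^ u) (hBv : B.orderTypeLT ≤ ω ^ v) :
    (A + B).orderTypeLT ≤ ω ^ (u ♯ v) :=
  pc_aux (u ♯ v) u v le_rfl A B hA hB hAu hBv

end OTAux
end PC

section MainPart

open scoped Ordinal Pointwise
open Ordinal
namespace OTAux

theorem exists_list_max {Γ : Type*} [LinearOrder Γ] :
    ∀ {l : List Γ}, l ≠ [] → ∃ t ∈ l, ∀ z ∈ l, z ≤ t := by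
  intro l
  induction l with
  | nil => intro h; exact absurd rfl h
  | cons g rest ih =>
    intro _
    rcases eq_or_ne rest [] with rfl | hne
    · exact ⟨g, List.mem_cons_self, by simp⟩
    · obtain ⟨t, htmem, htmax⟩ := ih hne
      rcases le_total g t with hgt | hgt
      · refine ⟨t, List.mem_cons_of_mem g htmem, ?_⟩
        intro z hz
        rcases List.mem_cons.1 hz with rfl | hz
        · exact hgt
        · exact htmax z hz
      · refine ⟨g, List.mem_cons_self, ?_⟩
        intro z hz
        rcases List.mem_cons.1 hz with rfl | hz
        · exact le_rfl
        · exact (htmax z hz).trans hgt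

theorem filter_sum_add {M : Type*} [AddCommMonoid M] (p : M → Bool) :
    ∀ l : List M, (l.filter p).sum + (l.filter (fun z => ! p z)).sum = l.sum := by
  intro l
  induction l with
  | nil => simp
  | cons g rest ih =>
    rcases Bool.eq_false_or_eq_true (p g) with hg | hg
    · rw [List.filter_cons_of_pos hg, List.filter_cons_of_neg (by simp [hg]),
        List.sum_cons, List.sum_cons, add_assoc, ih]
    · rw [List.filter_cons_of_neg (by simp [hg]), List.filter_cons_of_pos (by simp [hg]),
        List.sum_cons, List.sum_cons, add_left_comm, ih]

theorem orderTypeLT_singleton_le {Γ : Type*} [LinearOrder Γ] (g : Γ) :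
    ({g} : Set Γ).orderTypeLT ≤ 1 := by
  apply orderTypeLT_le_of_forall_lt Set.isWF_singleton
  intro x hx
  have hx' : x = g := hx
  have : ({g} : Set Γ) ∩ Set.Iio x = ∅ := by
    rw [hx']
    ext z
    simp only [Set.mem_inter_iff, Set.mem_singleton_iff, Set.mem_Iio, Set.mem_empty_iff_false,
      iff_false, not_and]
    rintro rfl
    exact lt_irrefl _
  rw [this, orderTypeLT_empty]
  exact zero_lt_one

variable {Γ : Type*} [AddCommGroup Γ] [LinearOrder Γ] [IsOrderedAddMonoid Γ]

private theorem main_aux (a : Ordinal) :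
    ∀ S : Set Γ, (∀ g ∈ S, 0 < g) → S.IsWF → S.orderTypeLT = a →
    (AddSubmonoid.closure S : Set Γ).orderTypeLT ≤ ω ^ (ω ⨳ a) := by
  induction a using Ordinal.induction with
  | _ a IHa =>
  intro S hpos hS hty
  have hTpwo : (AddSubmonoid.closure S : Set Γ).IsPWO :=
    Set.IsPWO.addSubmonoid_closure (fun x hx => (hpos x hx).le) hS.isPWO
  have hTwf : (AddSubmonoid.closure S : Set Γ).IsWF := hTpwo.isWF
  rcases S.eq_empty_or_nonempty with rfl | hSne
  · have ha : a = 0 := by rw [← hty, orderTypeLT_empty]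
    subst ha
    rw [nmul_zero, opow_zero, AddSubmonoid.closure_empty, AddSubmonoid.coe_bot]
    exact orderTypeLT_singleton_le (0 : Γ)
  apply orderTypeLT_le_of_forall_lt hTwf
  intro x hx
  by_cases hbnd : ∀ t ∈ S, t < x
  · -- Case B : `x` is above all of `S`
    obtain ⟨l, hl, hlsum⟩ := AddSubmonoid.exists_list_of_mem_closure hx
    have hlne : l ≠ [] := by
      rintro rfl
      obtain ⟨s, hs⟩ := hSne
      have h1 := hbnd s hs
      have h2 := hpos s hs
      rw [← hlsum] at h1
      exact absurd (h2.trans h1) (lt_irrefl _)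
    obtain ⟨t1, ht1mem, ht1max⟩ := exists_list_max hlne
    have ht1S : t1 ∈ S := hl t1 ht1mem
    set k := l.length with hkdef
    set S1 := S ∩ Set.Iio t1 with hS1def
    set S2 := S ∩ Set.Ici t1 with hS2def
    have hwf1 : S1.IsWF := hS.mono Set.inter_subset_left
    have hwf2 : S2.IsWF := hS.mono Set.inter_subset_left
    set γ := S1.orderTypeLT with hγdef
    set α'' := S2.orderTypeLT with hα''def
    have hγ : γ < a := by rw [← hty]; exact orderTypeLT_inter_Iio_lt hS ht1S
    have hSsplit : S = S1 ∪ S2 := by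
      ext z
      simp only [hS1def, hS2def, Set.mem_union, Set.mem_inter_iff, Set.mem_Iio, Set.mem_Ici]
      constructor
      · intro hz
        rcases lt_or_ge z t1 with h | h
        · exact Or.inl ⟨hz, h⟩
        · exact Or.inr ⟨hz, h⟩
      · rintro (⟨hz, _⟩ | ⟨hz, _⟩) <;> exact hz
    have ha : a = γ + α'' := by
      rw [← hty]
      conv_lhs => rw [hSsplit]
      exact orderTypeLT_union_eq hwf1 hwf2
        (fun p hp q hq => lt_of_lt_of_le hp.2 hq.2)
    have hα''0 : α'' ≠ 0 := by
      intro h0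
      have := eq_empty_of_orderTypeLT hwf2 h0
      rw [Set.eq_empty_iff_forall_notMem] at this
      exact this t1 ⟨ht1S, le_rfl⟩
    set δ := log ω α'' with hδdef
    have hδle : ω ^ δ ≤ α'' := opow_log_le_self ω hα''0
    have hS0wf : ({(0:Γ)} ∪ S2).IsWF := Set.isWF_singleton.union hwf2
    have hS0ty : ({(0:Γ)} ∪ S2).orderTypeLT ≤ ω ^ (δ + 1) := by
      calc ({(0:Γ)} ∪ S2).orderTypeLT ≤ ({(0:Γ)} : Set Γ).orderTypeLT ♯ α'' :=
            orderTypeLT_union_le Set.isWF_singleton hwf2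
        _ ≤ 1 ♯ α'' := nadd_le_nadd_right (orderTypeLT_singleton_le 0) α''
        _ = α'' + 1 := by rw [one_nadd, Ordinal.add_one_eq_succ]
        _ ≤ ω ^ (δ + 1) := by
            rw [Ordinal.add_one_eq_succ]
            refine Order.succ_le_of_lt ?_
            have := lt_opow_succ_log_self one_lt_omega0 α''
            rwa [← Ordinal.add_one_eq_succ] at this
    set Sig : ℕ → Set Γ := fun k =>
      {z | ∃ m : List Γ, (∀ g ∈ m, g ∈ S2) ∧ m.length ≤ k ∧ m.sum = z} with hSigdef
    have hSigsub : ∀ k, Sig k ⊆ (AddSubmonoid.closure S : Set Γ) := by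
      rintro k z ⟨m, hm, _, rfl⟩
      exact AddSubmonoid.list_sum_mem _
        (fun g hg => AddSubmonoid.subset_closure (hm g hg).1)
    have hSigwf : ∀ k, (Sig k).IsWF := fun k => hTwf.mono (hSigsub k)
    set e : ℕ → Ordinal := fun k => Nat.rec 0 (fun _ ih => ih ♯ (δ + 1)) k with hedef
    have he_lt : ∀ k, e k < ω ^ (δ + 1) := by
      intro k
      induction k with
      | zero => exact opow_pos _ omega0_pos
      | succ k ihk => exact nadd_lt_opow ihk (succ_lt_opow_succ δ)
    have hSigty : ∀ k, (Sig k).orderTypeLT ≤ ω ^ (e k) := by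
      intro k
      induction k with
      | zero =>
        have hsub : Sig 0 ⊆ {(0:Γ)} := by
          rintro z ⟨m, _, hlen, rfl⟩
          rw [Nat.le_zero, List.length_eq_zero_iff] at hlen
          subst hlen
          simp
        calc (Sig 0).orderTypeLT ≤ ({(0:Γ)} : Set Γ).orderTypeLT :=
              orderTypeLT_mono Set.isWF_singleton hsub
          _ ≤ 1 := orderTypeLT_singleton_le 0
          _ = ω ^ (e 0) := by rw [show e 0 = 0 from rfl, opow_zero]
      | succ k ihk =>
        have hstep : Sig (k+1) ⊆ Sig k + ({(0:Γ)} ∪ S2) := by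
          rintro z ⟨m, hm, hlen, rfl⟩
          cases m with
          | nil =>
            refine Set.mem_add.2 ⟨0, ⟨[], by simp, by simp, by simp⟩, 0, Or.inl rfl, by simp⟩
          | cons g rest =>
            refine Set.mem_add.2 ⟨rest.sum,
              ⟨rest, fun z hz => hm z (List.mem_cons_of_mem g hz),
                Nat.succ_le_succ_iff.1 (by simpa using hlen), rfl⟩,
              g, Or.inr (hm g (List.mem_cons_self)), ?_⟩
            rw [List.sum_cons, add_comm]
        calc (Sig (k+1)).orderTypeLT ≤ (Sig k + ({(0:Γ)} ∪ S2)).orderTypeLT :=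
              orderTypeLT_mono (addWF (hSigwf k) hS0wf) hstep
          _ ≤ ω ^ (e k ♯ (δ + 1)) := pc (hSigwf k) hS0wf ihk hS0ty
          _ = ω ^ (e (k+1)) := rfl
    have hposS1 : ∀ g ∈ S1, (0:Γ) < g := fun g hg => hpos g hg.1
    have hC := IHa γ hγ S1 hposS1 hwf1 rfl
    have hCpwo : (AddSubmonoid.closure S1 : Set Γ).IsPWO :=
      Set.IsPWO.addSubmonoid_closure (fun g hg => (hposS1 g hg).le) hwf1.isPWO
    have hCwf := hCpwo.isWF
    -- inclusion of the segment
    have hinc : (AddSubmonoid.closure S : Set Γ) ∩ Set.Iio x ⊆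
        Sig k + (AddSubmonoid.closure S1 : Set Γ) := by
      classical
      rintro y ⟨hy1, hy2⟩
      rw [Set.mem_Iio] at hy2
      obtain ⟨m, hm, rfl⟩ := AddSubmonoid.exists_list_of_mem_closure hy1
      set p : Γ → Bool := fun z => decide (t1 ≤ z) with hpdef
      set big := m.filter p with hbigdef
      set small := m.filter (fun z => ! p z) with hsmalldef
      have hsplit : big.sum + small.sum = m.sum := filter_sum_add p m
      have hbig_mem : ∀ g ∈ big, g ∈ S2 := by
        intro g hg
        have h1 := List.mem_filter.1 hg
        exact ⟨hm g h1.1, of_decide_eq_true h1.2⟩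
      have hsmall_mem : ∀ g ∈ small, g ∈ S1 := by
        intro g hg
        have h1 := List.mem_filter.1 hg
        have h2 : ¬ t1 ≤ g := by
          have h3 := h1.2
          simp only [hpdef, Bool.not_eq_true', decide_eq_false_iff_not] at h3
          exact h3
        exact ⟨hm g h1.1, not_le.1 h2⟩
      have hbiglen : big.length ≤ k := by
        by_contra hbl
        push_neg at hbl
        have h1 : big.length • t1 ≤ big.sum :=
          List.card_nsmul_le_sum big t1 (fun z hz => (hbig_mem z hz).2)
        have h2 : (k+1) • t1 ≤ big.length • t1 :=
          nsmul_le_nsmul_left (hpos t1 ht1S).le hbl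
        have h3 : l.sum ≤ k • t1 := List.sum_le_card_nsmul l t1 ht1max
        have h4 : k • t1 < (k+1) • t1 := nsmul_lt_nsmul_left (hpos t1 ht1S) (Nat.lt_succ_self k)
        have h5 : (0:Γ) ≤ small.sum :=
          List.sum_nonneg (fun z hz => (hpos z (hsmall_mem z hz).1).le)
        have h6 : big.sum ≤ m.sum := by
          rw [← hsplit]
          exact le_add_of_nonneg_right h5
        exact absurd (((h2.trans h1).trans h6).trans_lt
          ((hy2.trans_le (hlsum ▸ h3)).trans h4)) (lt_irrefl _)
      rw [← hsplit]
      exact Set.add_mem_add ⟨big, hbig_mem, hbiglen, rfl⟩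
        (AddSubmonoid.list_sum_mem _
          (fun g hg => AddSubmonoid.subset_closure (hsmall_mem g hg)))
    -- final arithmetic
    have hδne : (ω : Ordinal) ^ δ ≠ 0 := opow_ne_zero δ omega0_ne_zero
    have harith : e k ♯ ω ⨳ γ < ω ⨳ a := by
      set q := γ / ω ^ δ with hqdef
      set ρ := γ % ω ^ δ with hρdef
      have hρ : ρ < ω ^ δ := mod_lt γ hδne
      have h2 : ω ⨳ ρ ♯ e k < ω ^ (δ + 1) := by
        refine nadd_lt_opow ?_ (he_lt k)
        calc ω ⨳ ρ < ω ⨳ ω ^ δ := nmul_lt_nmul_of_pos_left hρ omega0_pos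
          _ = ω ^ (δ + 1) := nmul_omega0_opow δ
      have hγle : ω ⨳ γ ≤ ω ⨳ (ω ^ δ * q) ♯ ω ⨳ ρ := by
        calc ω ⨳ γ ≤ ω ⨳ (ω ^ δ * q ♯ ρ) := by
              refine nmul_le_nmul_left ?_ ω
              conv_lhs => rw [← div_add_mod γ (ω ^ δ)]
              exact add_le_nadd _ _
          _ = ω ⨳ (ω ^ δ * q) ♯ ω ⨳ ρ := nmul_nadd ω _ _
      calc e k ♯ ω ⨳ γ = ω ⨳ γ ♯ e k := nadd_comm _ _
        _ ≤ (ω ⨳ (ω ^ δ * q) ♯ ω ⨳ ρ) ♯ e k := nadd_le_nadd_right hγle _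
        _ = ω ⨳ (ω ^ δ * q) ♯ (ω ⨳ ρ ♯ e k) := nadd_assoc _ _ _
        _ < ω ⨳ (ω ^ δ * q) ♯ ω ^ (δ + 1) := nadd_lt_nadd_left h2 _
        _ = ω ⨳ (ω ^ δ * q) ♯ ω ⨳ ω ^ δ := by rw [nmul_omega0_opow]
        _ = ω ⨳ (ω ^ δ * q ♯ ω ^ δ) := (nmul_nadd ω _ _).symm
        _ = ω ⨳ (ω ^ δ * (q + 1)) := by rw [opow_mul_nadd_opow]
        _ ≤ ω ⨳ a := by
            refine nmul_le_nmul_left ?_ ω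
            rw [mul_add, mul_one, ha]
            exact add_le_add (mul_div_le γ (ω ^ δ)) hδle
    calc ((AddSubmonoid.closure S : Set Γ) ∩ Set.Iio x).orderTypeLT
        ≤ (Sig k + (AddSubmonoid.closure S1 : Set Γ)).orderTypeLT :=
          orderTypeLT_mono (addWF (hSigwf k) hCwf) hinc
      _ ≤ ω ^ (e k ♯ ω ⨳ γ) := pc (hSigwf k) hCwf (hSigty k) hC
      _ < ω ^ (ω ⨳ a) := (opow_lt_opow_iff_right one_lt_omega0).2 harith
  · -- Case A : some `t ∈ S` satisfies `x ≤ t`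
    push_neg at hbnd
    obtain ⟨t, htS, hxt⟩ := hbnd
    have hsub : (AddSubmonoid.closure S : Set Γ) ∩ Set.Iio x ⊆
        (AddSubmonoid.closure (S ∩ Set.Iio x) : Set Γ) := by
      rintro y ⟨hy1, hy2⟩
      rw [Set.mem_Iio] at hy2
      obtain ⟨m, hm, rfl⟩ := AddSubmonoid.exists_list_of_mem_closure hy1
      refine AddSubmonoid.list_sum_mem _ (fun g hg => AddSubmonoid.subset_closure ⟨hm g hg, ?_⟩)
      exact lt_of_le_of_lt
        (List.single_le_sum (fun z hz => (hpos z (hm z hz)).le) g hg) hy2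
    have hwfx : (S ∩ Set.Iio x).IsWF := hS.mono Set.inter_subset_left
    set γ := (S ∩ Set.Iio x).orderTypeLT with hγdef
    have hγ : γ < a := by
      rw [← hty]
      refine lt_of_le_of_lt ?_ (orderTypeLT_inter_Iio_lt hS htS)
      exact orderTypeLT_mono (hS.mono Set.inter_subset_left)
        (Set.inter_subset_inter_right S (Set.Iio_subset_Iio hxt))
    have hposx : ∀ g ∈ S ∩ Set.Iio x, (0:Γ) < g := fun g hg => hpos g hg.1
    have hC := IHa γ hγ (S ∩ Set.Iio x) hposx hwfx rfl
    have hCpwo : (AddSubmonoid.closure (S ∩ Set.Iio x) : Set Γ).IsPWO :=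
      Set.IsPWO.addSubmonoid_closure (fun g hg => (hposx g hg).le) hwfx.isPWO
    calc ((AddSubmonoid.closure S : Set Γ) ∩ Set.Iio x).orderTypeLT
        ≤ (AddSubmonoid.closure (S ∩ Set.Iio x) : Set Γ).orderTypeLT :=
          orderTypeLT_mono hCpwo.isWF hsub
      _ ≤ ω ^ (ω ⨳ γ) := hC
      _ < ω ^ (ω ⨳ a) := (opow_lt_opow_iff_right one_lt_omega0).2
          (nmul_lt_nmul_of_pos_left hγ omega0_pos)

end OTAux
end MainPart

/-- If `S` is a well-ordered subset of the strictly positive elements of a linearly ordered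
abelian group `Γ`, of order type `α`, then the additive submonoid generated by `S` is itself
well-ordered, of order type at most `ω ^ (ω ⨳ α)` (`⨳` is the natural/Hessenberg product). -/
theorem addSubmonoid_closure_isWF_orderType_le {Γ : Type*} [AddCommGroup Γ] [LinearOrder Γ]
    [IsOrderedAddMonoid Γ]
    (S : Set Γ) (hSpos : ∀ g ∈ S, 0 < g) (hS : S.IsWF) (α : Ordinal)
    (hα : S.orderTypeLT = α) :
    (AddSubmonoid.closure S : Set Γ).IsWF ∧
      (AddSubmonoid.closure S : Set Γ).orderTypeLT ≤ ω ^ (ω ⨳ α) := by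
  refine ⟨(Set.IsPWO.addSubmonoid_closure (fun x hx => (hSpos x hx).le) hS.isPWO).isWF, ?_⟩
  exact OTAux.main_aux α S hSpos hS hα
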